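/- Let S be the symmetric traceless d×d matrices, σ > 0, ρ > 0, and define χ : S × S → S by χ(p, λ) := max{σ, |λ + ρp|_F}·λ − σ·(λ + ρp). Then for λ with |λ|_F ≤ σ, one has χ(p, λ) = 0 if and only if λ : p = σ·|p|_F. -/

import Mathlib

noncomputable def frobNorm {d : ℕ} (A : Matrix (Fin d) (Fin d) ℝ) : ℝ :=
  Real.sqrt (∑ i, ∑ j, (A i j) ^ 2)

noncomputable def frobInner {d : ℕ} (A B : Matrix (Fin d) (Fin d) ℝ) : ℝ :=
  ∑ i, ∑ j, A i j * B i j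

open RealInnerProductSpace

noncomputable def toE {d : ℕ} (A : Matrix (Fin d) (Fin d) ℝ) :
    EuclideanSpace ℝ (Fin d × Fin d) :=
  WithLp.toLp 2 fun (ij : Fin d × Fin d) => A ij.1 ij.2

lemma toE_add {d : ℕ} (A B : Matrix (Fin d) (Fin d) ℝ) :
    toE (A + B) = toE A + toE B := by ext; simp [toE]

lemma toE_smul {d : ℕ} (c : ℝ) (A : Matrix (Fin d) (Fin d) ℝ) :
    toE (c • A) = c • toE A := by ext; simp [toE]

lemma toE_sub {d : ℕ} (A B : Matrix (Fin d) (Fin d) ℝ) :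
    toE (A - B) = toE A - toE B := by ext; simp [toE]

lemma toE_eq_zero {d : ℕ} (A : Matrix (Fin d) (Fin d) ℝ) :
    toE A = 0 ↔ A = 0 := by
  constructor
  · intro h
    ext i j
    have := congrArg (fun v => v (i, j)) h
    simpa [toE] using this
  · rintro rfl; ext; simp [toE]

lemma frobNorm_eq {d : ℕ} (A : Matrix (Fin d) (Fin d) ℝ) :
    frobNorm A = ‖toE A‖ := by
  rw [EuclideanSpace.norm_eq, frobNorm]
  congr 1
  rw [Fintype.sum_prod_type]
  apply Finset.sum_congr rfl; intro i _
  apply Finset.sum_congr rfl; intro j _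
  simp [toE, Real.norm_eq_abs, sq_abs]

lemma frobInner_eq {d : ℕ} (A B : Matrix (Fin d) (Fin d) ℝ) :
    frobInner A B = ⟪toE A, toE B⟫ := by
  rw [PiLp.inner_apply, frobInner, Fintype.sum_prod_type]
  apply Finset.sum_congr rfl; intro i _
  apply Finset.sum_congr rfl; intro j _
  simp [toE, RCLike.inner_apply, mul_comm]

lemma abstract_chi {E : Type*} [NormedAddCommGroup E] [InnerProductSpace ℝ E]
    (σ ρ : ℝ) (hσ : 0 < σ) (hρ : 0 < ρ) (x y : E) (hbd : ‖x‖ ≤ σ) :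
    (max σ ‖x + ρ • y‖ • x - σ • (x + ρ • y) = 0) ↔ ⟪x, y⟫ = σ * ‖y‖ := by
  constructor
  · intro h
    rcases le_or_gt ‖x + ρ • y‖ σ with hN | hN
    · rw [max_eq_left hN] at h
      have h2 : (σ * ρ) • y = 0 := by
        rw [smul_add, smul_smul, sub_add_eq_sub_sub, sub_self, zero_sub,
          neg_eq_zero] at h
        exact h
      have hy : y = 0 := by
        rcases smul_eq_zero.mp h2 with h3 | h3
        · exact absurd h3 (by positivity)
        · exact h3
      simp [hy]
    · rw [max_eq_right hN.le, sub_eq_zero] at h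
      set N := ‖x + ρ • y‖ with hNdef
      have hN0 : 0 < N := lt_trans hσ hN
      have hxnorm : ‖x‖ = σ := by
        have h1 := congrArg norm h
        rw [norm_smul, norm_smul, Real.norm_eq_abs, Real.norm_eq_abs,
          abs_of_pos hN0, abs_of_pos hσ, ← hNdef] at h1
        have h2 := mul_left_cancel₀ (ne_of_gt hN0) (by linarith : N * ‖x‖ = N * σ)
        linarith
      have h4 : σ * ρ ≠ 0 := by positivity
      rw [smul_add, smul_smul] at h
      have h3 : (σ * ρ) • y = (N - σ) • x := by
        rw [sub_smul, h]; abel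
      have hyx : y = ((N - σ) / (σ * ρ)) • x := by
        rw [div_eq_inv_mul, mul_smul, ← h3, inv_smul_smul₀ h4]
      have ht : 0 ≤ (N - σ) / (σ * ρ) := by
        apply div_nonneg (by linarith) (by positivity)
      rw [hyx, real_inner_smul_right, real_inner_self_eq_norm_sq, hxnorm,
        norm_smul, Real.norm_eq_abs, abs_of_nonneg ht, hxnorm]
      ring
  · intro h
    rcases eq_or_ne y 0 with hy | hy
    · subst hy
      simp [max_eq_left hbd]
    · have hy0 : 0 < ‖y‖ := norm_pos_iff.mpr hy
      have hcs : ⟪x, y⟫ ≤ ‖x‖ * ‖y‖ := real_inner_le_norm x y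
      have hxnorm : ‖x‖ = σ := by
        have : σ * ‖y‖ ≤ ‖x‖ * ‖y‖ := by rw [← h]; exact hcs
        have := le_of_mul_le_mul_right this hy0
        linarith
      have heq : ⟪x, y⟫ = ‖x‖ * ‖y‖ := by rw [hxnorm]; exact h
      have hpar : ‖y‖ • x = ‖x‖ • y := inner_eq_norm_mul_iff_real.mp heq
      have hyx : y = (‖y‖ / σ) • x := by
        rw [div_eq_inv_mul, mul_smul, hpar, hxnorm, inv_smul_smul₀ (ne_of_gt hσ)]
      set t := ‖y‖ / σ with htdef
      have ht : 0 ≤ t := by positivity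
      have hc : x + ρ • y = (1 + ρ * t) • x := by
        rw [hyx, smul_smul, add_smul, one_smul]
      have hc1 : (0:ℝ) < 1 + ρ * t := by positivity
      rw [hc, norm_smul, Real.norm_eq_abs, abs_of_pos hc1, hxnorm]
      have hmax : max σ ((1 + ρ * t) * σ) = (1 + ρ * t) * σ := by
        apply max_eq_right
        nlinarith [mul_nonneg (mul_nonneg hρ.le ht) hσ.le]
      rw [hmax, smul_smul]
      module

theorem chi_zero_iff_complementarity
    {d : ℕ} (σ ρ : ℝ) (hσ : 0 < σ) (hρ : 0 < ρ)
    (p lam : Matrix (Fin d) (Fin d) ℝ)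
    (hp : p.transpose = p ∧ p.trace = 0)
    (hlam : lam.transpose = lam ∧ lam.trace = 0)
    (hbd : frobNorm lam ≤ σ) :
    (max σ (frobNorm (lam + ρ • p)) • lam - σ • (lam + ρ • p) = 0) ↔
      frobInner lam p = σ * frobNorm p := by
  rw [frobNorm_eq] at hbd
  rw [frobInner_eq, frobNorm_eq p, frobNorm_eq (lam + ρ • p), toE_add, toE_smul,
    ← toE_eq_zero, toE_sub, toE_smul, toE_smul, toE_add, toE_smul]
  exact abstract_chi σ ρ hσ hρ (toE lam) (toE p) hbd
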